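/- Let ℓ ≥ 1, n ≥ 1, and let m_1 ≥ m_2 ≥ … ≥ m_ℓ ≥ 1 be integers. Then the IC-index of the complete (n+ℓ)-partite graph K_{1(n),m_ℓ,m_{ℓ−1},…,m_2,m_1} = O_{m_1} ∨ O_{m_2} ∨ ⋯ ∨ O_{m_ℓ} ∨ K_n satisfies M(K_{1(n),m_ℓ,…,m_1}) ≥ 2^{m_1}(2^{m_2}(⋯(2^{m_ℓ}(2^n − 1) + 1)⋯) + 1) + 1. -/

import Mathlib

/-- The join `H₀ ∨ H₁` of two graphs: all edges of `H₀`, all edges of `H₁`, and all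
pairs with one endpoint in each. -/
def graphJoin {α β : Type*} (G : SimpleGraph α) (H : SimpleGraph β) :
    SimpleGraph (α ⊕ β) where
  Adj x y :=
    match x, y with
    | Sum.inl a, Sum.inl b => G.Adj a b
    | Sum.inr a, Sum.inr b => H.Adj a b
    | Sum.inl _, Sum.inr _ => True
    | Sum.inr _, Sum.inl _ => True
  symm := by
    refine ⟨?_⟩
    rintro (a | a) (b | b) h
    · exact G.adj_symm h
    · trivial
    · trivial
    · exact H.adj_symm h
  loopless := by
    refine ⟨?_⟩
    rintro (a | a) h
    · exact G.loopless.irrefl a h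
    · exact H.loopless.irrefl a h

/-- A coloring `f : V(G) → ℕ` (positive-valued) is an IC-coloring if every integer
`k` with `1 ≤ k ≤ f(G)` is the `f`-sum of some nonempty vertex subset inducing a
connected subgraph. -/
def IsICColoring {α : Type*} [Fintype α] (G : SimpleGraph α) (f : α → ℕ) : Prop :=
  (∀ v, 0 < f v) ∧
    ∀ k : ℕ, 1 ≤ k → k ≤ ∑ v, f v →
      ∃ S : Finset α, S.Nonempty ∧ (G.induce (S : Set α)).Connected ∧
        ∑ v ∈ S, f v = k

/-- The IC-index `M(G)`: the maximum of `f(G)` over all IC-colorings `f` of `G`. -/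
noncomputable def ICIndex {α : Type*} [Fintype α] (G : SimpleGraph α) : ℕ :=
  sSup {t | ∃ f : α → ℕ, IsICColoring G f ∧ ∑ v, f v = t}

/-- `K_{1(n),m} = O_m ∨ K_n`: the complete `(n+1)`-partite graph with `n` parts of
size one and one part (`V₀ = Fin m`, the left summand) of size `m`. -/
def K1nm (m n : ℕ) : SimpleGraph (Fin m ⊕ Fin n) :=
  graphJoin (⊥ : SimpleGraph (Fin m)) (⊤ : SimpleGraph (Fin n))

/-- Vertex type of `O_{m₁} ∨ O_{m₂} ∨ ⋯ ∨ O_{m_ℓ} ∨ K_n` for `ms = [m₁, …, m_ℓ]`. -/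
def multiJoinType : List ℕ → ℕ → Type
  | [], n => Fin n
  | m :: ms, n => Fin m ⊕ multiJoinType ms n

instance multiJoinType.fintype : (ms : List ℕ) → (n : ℕ) → Fintype (multiJoinType ms n)
  | [], n => inferInstanceAs (Fintype (Fin n))
  | m :: ms, n =>
      letI := multiJoinType.fintype ms n
      inferInstanceAs (Fintype (Fin m ⊕ multiJoinType ms n))

/-- The complete multipartite graph
`K_{1(n),m_ℓ,…,m₁} = O_{m₁} ∨ O_{m₂} ∨ ⋯ ∨ O_{m_ℓ} ∨ K_n` for `ms = [m₁, …, m_ℓ]`. -/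
def multiJoinGraph : (ms : List ℕ) → (n : ℕ) → SimpleGraph (multiJoinType ms n)
  | [], _ => ⊤
  | m :: ms, n => graphJoin (⊥ : SimpleGraph (Fin m)) (multiJoinGraph ms n)

/-- The nested lower bound `2^{m₁}(2^{m₂}(⋯(2^{m_ℓ}(2^n − 1) + 1)⋯) + 1) + 1`
for `ms = [m₁, …, m_ℓ]`. -/
def nestedBound : List ℕ → ℕ → ℕ
  | [], n => 2 ^ n - 1
  | m :: ms, n => 2 ^ m * nestedBound ms n + 1

lemma sum_two_pow (m : ℕ) : ∑ i ∈ Finset.range m, 2 ^ i = 2 ^ m - 1 := by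
  induction m with
  | zero => simp
  | succ k ih =>
    rw [Finset.sum_range_succ, ih, pow_succ]
    have : 1 ≤ 2 ^ k := Nat.one_le_two_pow
    omega

lemma bits (m : ℕ) : ∀ t : ℕ, t < 2 ^ m →
    ∃ T : Finset (Fin m), (∑ i ∈ T, 2 ^ (i : ℕ)) = t ∧
      (∀ i ∈ T, 2 ^ (i : ℕ) ≤ t) ∧
      (∀ hm : 0 < m, 2 ^ (m - 1) ≤ t → (⟨m - 1, Nat.sub_lt hm one_pos⟩ : Fin m) ∈ T) := by
  intro t
  induction t using Nat.strong_induction_on with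
  | _ t ih =>
    intro htm
    rcases Nat.eq_zero_or_pos t with rfl | ht
    · refine ⟨∅, by simp, by simp, ?_⟩
      intro hm h
      have : 0 < 2 ^ (m - 1) := Nat.pow_pos (by norm_num)
      omega
    · set j := Nat.log 2 t with hj
      have h1 : 2 ^ j ≤ t := Nat.pow_log_le_self 2 ht.ne'
      have h2 : t < 2 ^ (j + 1) := Nat.lt_pow_succ_log_self one_lt_two t
      have hjm : j < m := by
        by_contra h
        push_neg at h
        exact absurd (h1.trans_lt htm) ((Nat.pow_le_pow_right (by norm_num) h : 2 ^ m ≤ 2 ^ j)).not_gt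
      have hpj : 0 < 2 ^ j := Nat.pow_pos (by norm_num)
      have ht' : t - 2 ^ j < t := by omega
      have h2' : 2 ^ (j + 1) = 2 * 2 ^ j := by ring
      obtain ⟨T', hs', hb', _⟩ := ih (t - 2 ^ j) ht' (by omega)
      have hjT' : (⟨j, hjm⟩ : Fin m) ∉ T' := by
        intro h
        have := hb' _ h
        simp only [Fin.val_mk] at this
        omega
      refine ⟨insert ⟨j, hjm⟩ T', ?_, ?_, ?_⟩
      · rw [Finset.sum_insert hjT', hs']
        simp only [Fin.val_mk]
        omega
      · intro i hi
        rcases Finset.mem_insert.1 hi with rfl | hi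
        · simpa using h1
        · exact (hb' _ hi).trans (Nat.sub_le _ _)
      · intro hm hlast
        have hjm1 : j = m - 1 := by
          have : 2 ^ (m - 1) < 2 ^ (j + 1) := lt_of_le_of_lt hlast h2
          have := (Nat.pow_lt_pow_iff_right (a := 2) (by norm_num)).1 this
          omega
        have heq : (⟨m - 1, Nat.sub_lt hm one_pos⟩ : Fin m) = ⟨j, hjm⟩ := by
          simp [Fin.ext_iff, hjm1]
        rw [heq]
        exact Finset.mem_insert_self _ _

lemma induce_connected_of_hub {V : Type*} (G : SimpleGraph V) (S : Set V)
    (hub : V) (hhub : hub ∈ S)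
    (h : ∀ v ∈ S, v = hub ∨ G.Adj v hub ∨ ∃ w ∈ S, G.Adj v w ∧ G.Adj w hub) :
    (G.induce S).Connected := by
  rw [SimpleGraph.connected_iff]
  refine ⟨?_, ⟨⟨hub, hhub⟩⟩⟩
  have key : ∀ x : S, (G.induce S).Reachable x ⟨hub, hhub⟩ := by
    rintro ⟨v, hv⟩
    rcases h v hv with rfl | hadj | ⟨w, hw, h1, h2⟩
    · exact SimpleGraph.Reachable.refl _
    · exact SimpleGraph.Adj.reachable hadj
    · exact (SimpleGraph.Adj.reachable
        (show (G.induce S).Adj ⟨v, hv⟩ ⟨w, hw⟩ from h1)).trans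
        (SimpleGraph.Adj.reachable (show (G.induce S).Adj ⟨w, hw⟩ ⟨hub, hhub⟩ from h2))
  intro x y
  exact (key x).trans (key y).symm

lemma base_coloring (n : ℕ) (hn : 1 ≤ n) :
    ∃ f : Fin n → ℕ, IsICColoring (⊤ : SimpleGraph (Fin n)) f ∧ ∑ v, f v = 2 ^ n - 1 := by
  have htot : ∑ i : Fin n, 2 ^ (i : ℕ) = 2 ^ n - 1 := by
    rw [Fin.sum_univ_eq_sum_range (fun i => 2 ^ i) n, sum_two_pow]
  refine ⟨fun i => 2 ^ (i : ℕ), ⟨fun v => Nat.pow_pos (by norm_num), ?_⟩, htot⟩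
  intro k hk1 hk2
  rw [htot] at hk2
  have h2n : 1 ≤ 2 ^ n := Nat.one_le_two_pow
  obtain ⟨T, hT, _, _⟩ := bits n k (by omega)
  have hTne : T.Nonempty := by
    rcases T.eq_empty_or_nonempty with rfl | h
    · simp at hT; omega
    · exact h
  obtain ⟨a, ha⟩ := hTne
  refine ⟨T, ⟨a, ha⟩, ?_, hT⟩
  apply induce_connected_of_hub _ _ a (by simpa using ha)
  intro v hv
  by_cases hva : v = a
  · exact Or.inl hva
  · exact Or.inr (Or.inl (by simpa using hva))

lemma join_step {β : Type*} [Fintype β] (H : SimpleGraph β) (m : ℕ) (hm : 1 ≤ m)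
    (f : β → ℕ) (hf : IsICColoring H f) (s : ℕ) (hs : ∑ v, f v = s) (hs1 : 1 ≤ s) :
    ∃ g : Fin m ⊕ β → ℕ,
      IsICColoring (graphJoin (⊥ : SimpleGraph (Fin m)) H) g ∧
      ∑ v, g v = 2 ^ m * s + 1 := by
  classical
  set G := graphJoin (⊥ : SimpleGraph (Fin m)) H with hG
  set last : Fin m := ⟨m - 1, by omega⟩ with hlast
  set g : Fin m ⊕ β → ℕ :=
    Sum.elim (fun i => 2 ^ (i : ℕ) * s + if (i : ℕ) = m - 1 then 1 else 0) f with hg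
  have h2m : 1 ≤ 2 ^ m := Nat.one_le_two_pow
  have h2m1 : 2 ^ (m - 1) ≤ 2 ^ m := Nat.pow_le_pow_right (by norm_num) (by omega)
  -- total sum
  have hone : (∑ i : Fin m, if (i : ℕ) = m - 1 then (1:ℕ) else 0) = 1 := by
    have : (∑ i : Fin m, if (i : ℕ) = m - 1 then (1:ℕ) else 0)
        = ∑ i : Fin m, if i = last then (1:ℕ) else 0 := by
      apply Finset.sum_congr rfl
      intro i _
      simp [hlast, Fin.ext_iff]
    rw [this, Finset.sum_ite_eq' Finset.univ last (fun _ => (1:ℕ))]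
    simp
  have hsuml : ∑ i : Fin m, g (Sum.inl i) = (2 ^ m - 1) * s + 1 := by
    simp only [hg, Sum.elim_inl]
    rw [Finset.sum_add_distrib, hone, ← Finset.sum_mul]
    rw [Fin.sum_univ_eq_sum_range (fun i => 2 ^ i) m, sum_two_pow]
  have htot : ∑ v, g v = 2 ^ m * s + 1 := by
    rw [Fintype.sum_sum_type, hsuml]
    have : ∑ v, g (Sum.inr v) = s := by simp [hg, hs]
    rw [this]
    have hms : s ≤ 2 ^ m * s := Nat.le_mul_of_pos_left s (by omega)
    have : (2 ^ m - 1) * s = 2 ^ m * s - s := by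
      rw [Nat.sub_one_mul]
    omega
  refine ⟨g, ⟨?_, ?_⟩, htot⟩
  · rintro (i | v)
    · have : 1 ≤ 2 ^ (i : ℕ) * s :=
        Nat.one_le_iff_ne_zero.2 (Nat.mul_ne_zero (Nat.pow_pos (by norm_num)).ne' (by omega))
      simp only [hg, Sum.elim_inl]
      omega
    · exact hf.1 v
  intro k hk1 hk2
  rw [htot] at hk2
  by_cases hks : k ≤ s
  -- Case 1: use H alone
  · obtain ⟨U, hUne, hUconn, hUsum⟩ := hf.2 k hk1 (by omega)
    set emb : β ↪ Fin m ⊕ β := ⟨Sum.inr, Sum.inr_injective⟩ with hemb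
    refine ⟨U.map emb, hUne.map, ?_, by rw [Finset.sum_map]; simpa [hg, hemb] using hUsum⟩
    let hhom : (H.induce (U : Set β)) →g (G.induce ((U.map emb : Finset (Fin m ⊕ β)) : Set (Fin m ⊕ β))) :=
      ⟨fun x => ⟨Sum.inr x.1, by
          simp only [Finset.coe_map, Set.mem_image, Finset.mem_coe]
          exact ⟨x.1, x.2, rfl⟩⟩,
        fun {a b} hab => hab⟩
    apply SimpleGraph.Connected.map hhom ?_ hUconn
    rintro ⟨y, hy⟩
    simp only [Finset.coe_map, Set.mem_image, Finset.mem_coe] at hy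
    obtain ⟨x, hx, rfl⟩ := hy
    exact ⟨⟨x, hx⟩, rfl⟩
  by_cases hkm : k = 2 ^ (m - 1) * s + 1
  -- Case 2: singleton of the special vertex
  · refine ⟨{Sum.inl last}, ⟨_, Finset.mem_singleton_self _⟩, ?_, ?_⟩
    · apply induce_connected_of_hub _ _ (Sum.inl last) (by simp)
      intro v hv
      simp only [Finset.coe_singleton, Set.mem_singleton_iff] at hv
      exact Or.inl hv
    · simp [hg, hlast, hkm]
  -- Case 3: general
  · have hks' : s + 1 ≤ k := by omega
    obtain ⟨t, j, ht1, ht2, hj1, hj2, hk⟩ :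
        ∃ t j : ℕ, 1 ≤ t ∧ t < 2 ^ m ∧ 1 ≤ j ∧ j ≤ s ∧
          k = t * s + (if 2 ^ (m - 1) ≤ t then 1 else 0) + j := by
      have hspos : 0 < s := hs1
      by_cases hA : k ≤ 2 ^ (m - 1) * s
      · obtain ⟨q, r, hqr, hr⟩ : ∃ q r, k - 1 = s * q + r ∧ r < s :=
          ⟨(k - 1) / s, (k - 1) % s, (Nat.div_add_mod _ _).symm, Nat.mod_lt _ hspos⟩
        have hc : s * q = q * s := mul_comm _ _
        have hq1 : 1 ≤ q := by
          rcases Nat.eq_zero_or_pos q with rfl | h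
          · simp at hqr; omega
          · exact h
        have hq2 : q < 2 ^ (m - 1) := by
          by_contra h
          push_neg at h
          have h1 : s * 2 ^ (m - 1) ≤ s * q := Nat.mul_le_mul_left s h
          have h2 : s * 2 ^ (m - 1) = 2 ^ (m - 1) * s := mul_comm _ _
          omega
        refine ⟨q, k - q * s, hq1, by omega, by omega, by omega, ?_⟩
        rw [if_neg (by omega)]
        omega
      · have hklb : 2 ^ (m - 1) * s + 2 ≤ k := by omega
        obtain ⟨q, r, hqr, hr⟩ : ∃ q r, k - 2 = s * q + r ∧ r < s :=
          ⟨(k - 2) / s, (k - 2) % s, (Nat.div_add_mod _ _).symm, Nat.mod_lt _ hspos⟩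
        have hc : s * q = q * s := mul_comm _ _
        have hq1 : 2 ^ (m - 1) ≤ q := by
          by_contra h
          push_neg at h
          have h1 : s * (q + 1) ≤ s * 2 ^ (m - 1) := Nat.mul_le_mul_left s (by omega)
          have h2 : s * (q + 1) = s * q + s := by ring
          have h3 : s * 2 ^ (m - 1) = 2 ^ (m - 1) * s := mul_comm _ _
          omega
        have hq2 : q < 2 ^ m := by
          by_contra h
          push_neg at h
          have h1 : s * 2 ^ m ≤ s * q := Nat.mul_le_mul_left s h
          have h2 : s * 2 ^ m = 2 ^ m * s := mul_comm _ _
          have h3 : 0 < 2 ^ m * s := by positivity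
          omega
        have hp1 : 1 ≤ 2 ^ (m - 1) := Nat.one_le_two_pow
        refine ⟨q, k - q * s - 1, by omega, hq2, by omega, by omega, ?_⟩
        rw [if_pos hq1]
        omega
    obtain ⟨T, hTsum, hTpow, hTlast⟩ := bits m t ht2
    have hTne : T.Nonempty := by
      rcases T.eq_empty_or_nonempty with rfl | h
      · simp at hTsum; omega
      · exact h
    have hmemiff : (last ∈ T) ↔ 2 ^ (m - 1) ≤ t := by
      constructor
      · intro h
        have := hTpow _ h
        simpa [hlast] using this
      · intro h
        exact hTlast (by omega) h
    have hsumT : ∑ i ∈ T, g (Sum.inl i) = t * s + (if 2 ^ (m - 1) ≤ t then 1 else 0) := by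
      simp only [hg, Sum.elim_inl]
      rw [Finset.sum_add_distrib, ← Finset.sum_mul, hTsum]
      congr 1
      have : (∑ i ∈ T, if (i : ℕ) = m - 1 then (1:ℕ) else 0)
          = ∑ i ∈ T, if i = last then (1:ℕ) else 0 := by
        apply Finset.sum_congr rfl
        intro i _
        simp [hlast, Fin.ext_iff]
      rw [this, Finset.sum_ite_eq' T last (fun _ => (1:ℕ))]
      by_cases h : 2 ^ (m - 1) ≤ t
      · rw [if_pos (hmemiff.2 h), if_pos h]
      · rw [if_neg (fun hh => h (hmemiff.1 hh)), if_neg h]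
    obtain ⟨U, hUne, hUconn, hUsum⟩ := hf.2 j hj1 (by omega)
    set embl : Fin m ↪ Fin m ⊕ β := ⟨Sum.inl, Sum.inl_injective⟩ with hembl
    set embr : β ↪ Fin m ⊕ β := ⟨Sum.inr, Sum.inr_injective⟩ with hembr
    set S : Finset (Fin m ⊕ β) := T.map embl ∪ U.map embr with hS
    have hdisj : Disjoint (T.map embl) (U.map embr) := by
      rw [Finset.disjoint_left]
      rintro a ha hb
      simp only [Finset.mem_map, hembl, hembr, Function.Embedding.coeFn_mk] at ha hb
      obtain ⟨x, _, rfl⟩ := ha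
      obtain ⟨y, _, h⟩ := hb
      exact Sum.inl_ne_inr h.symm
    obtain ⟨t₀, ht₀⟩ := hTne
    obtain ⟨v₀, hv₀⟩ := hUne
    have ht₀S : Sum.inl t₀ ∈ S :=
      Finset.mem_union_left _ (Finset.mem_map.2 ⟨t₀, ht₀, rfl⟩)
    have hv₀S : Sum.inr v₀ ∈ S :=
      Finset.mem_union_right _ (Finset.mem_map.2 ⟨v₀, hv₀, rfl⟩)
    refine ⟨S, ⟨_, ht₀S⟩, ?_, ?_⟩
    · apply induce_connected_of_hub _ _ (Sum.inr v₀) (Finset.mem_coe.2 hv₀S)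
      intro v hv
      match v with
      | Sum.inl a => exact Or.inr (Or.inl trivial)
      | Sum.inr u =>
          exact Or.inr (Or.inr ⟨Sum.inl t₀, Finset.mem_coe.2 ht₀S, trivial, trivial⟩)
    · rw [hS, Finset.sum_union hdisj, Finset.sum_map, Finset.sum_map]
      have h1 : ∑ v ∈ U, g (embr v) = j := by simpa [hg, hembr] using hUsum
      have h2 : ∑ i ∈ T, g (embl i) = t * s + (if 2 ^ (m - 1) ≤ t then 1 else 0) := by
        simpa [hembl] using hsumT
      rw [h1, h2]
      omega

lemma nestedBound_pos (ms : List ℕ) (n : ℕ) (hn : 1 ≤ n) : 1 ≤ nestedBound ms n := by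
  cases ms with
  | nil =>
      have : 2 ≤ 2 ^ n := by
        calc 2 = 2 ^ 1 := (pow_one 2).symm
        _ ≤ 2 ^ n := Nat.pow_le_pow_right (by norm_num) hn
      simp only [nestedBound]
      omega
  | cons m ms => simp [nestedBound]

lemma main_aux (n : ℕ) (hn : 1 ≤ n) :
    ∀ ms : List ℕ, (∀ x ∈ ms, 1 ≤ x) →
      ∃ f : multiJoinType ms n → ℕ,
        IsICColoring (multiJoinGraph ms n) f ∧ ∑ v, f v = nestedBound ms n := by
  intro ms
  induction ms with
  | nil =>
      intro _
      exact base_coloring n hn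
  | cons m ms ih =>
      intro hpos
      obtain ⟨f, hf, hsum⟩ := ih (fun x hx => hpos x (List.mem_cons_of_mem _ hx))
      have hm : 1 ≤ m := hpos m List.mem_cons_self
      have hs1 : 1 ≤ nestedBound ms n := nestedBound_pos ms n hn
      obtain ⟨g, hg, hgsum⟩ :=
        join_step (multiJoinGraph ms n) m hm f hf (nestedBound ms n) hsum hs1
      exact ⟨g, hg, hgsum⟩

lemma ic_bddAbove {α : Type*} [Fintype α] (G : SimpleGraph α) :
    BddAbove {t | ∃ f : α → ℕ, IsICColoring G f ∧ ∑ v, f v = t} := by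
  classical
  refine ⟨2 ^ Fintype.card α, ?_⟩
  rintro t ⟨f, ⟨hpos, hcov⟩, hsum⟩
  have hchoice : ∀ k, 1 ≤ k → k ≤ t → ∃ S : Finset α, S.Nonempty ∧
      (G.induce (S : Set α)).Connected ∧ ∑ v ∈ S, f v = k := by
    intro k h1 h2
    exact hcov k h1 (hsum ▸ h2)
  set φ : ℕ → Finset α := fun k =>
    if h : 1 ≤ k ∧ k ≤ t then (hchoice k h.1 h.2).choose else ∅ with hφ
  have hφsum : ∀ k, 1 ≤ k → k ≤ t → ∑ v ∈ φ k, f v = k := by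
    intro k h1 h2
    simp only [hφ, dif_pos (And.intro h1 h2)]
    exact (hchoice k h1 h2).choose_spec.2.2
  have hcard : (Finset.Icc 1 t).card ≤ (Finset.univ : Finset (Finset α)).card := by
    apply Finset.card_le_card_of_injOn φ (fun _ _ => Finset.mem_univ _)
    intro a ha b hb hab
    simp only [Finset.coe_Icc, Set.mem_Icc] at ha hb
    have h1 := hφsum a ha.1 ha.2
    have h2 := hφsum b hb.1 hb.2
    rw [hab] at h1
    omega
  rw [Nat.card_Icc, Finset.card_univ, Fintype.card_finset] at hcard
  omega

/-- For `ℓ ≥ 1`, `n ≥ 1` and integers `m₁ ≥ m₂ ≥ ⋯ ≥ m_ℓ ≥ 1`,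
`M(K_{1(n),m_ℓ,…,m₁}) ≥ 2^{m₁}(2^{m₂}(⋯(2^{m_ℓ}(2^n − 1) + 1)⋯) + 1) + 1`. -/
theorem stmt_8 (ℓ n : ℕ) (hℓ : 1 ≤ ℓ) (hn : 1 ≤ n)
    (ms : List ℕ) (hlen : ms.length = ℓ)
    (hsorted : ms.Chain' (· ≥ ·)) (hpos : ∀ x ∈ ms, 1 ≤ x) :
    nestedBound ms n ≤ ICIndex (multiJoinGraph ms n) := by
  obtain ⟨f, hf, hsum⟩ := main_aux n hn ms hpos
  exact le_csSup (ic_bddAbove _) ⟨f, hf, hsum⟩
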